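/- Let C be a squares category in which all vertical weak equivalences are invertible and such that for every distinguished square with invertible vertical edges g : A ↠ C and h : B ↠ D, the boundary (k, g⁻¹, h⁻¹, f) obtained by inverting the vertical edges is again a distinguished square. Then every category S^□_n(C) in the S^□-construction is a groupoid. -/
import Mathlib


/-- A flat double category: objects, horizontal and vertical morphisms each forming
a category, and a `Prop`-valued predicate `Sq` picking out the (distinguished)
squares, closed under horizontal and vertical identities and pastings. Since a
square is determined by its boundary, flatness is built in. -/
structure FlatDoubleCat where
  Ob : Type
  /-- horizontal morphisms `A ↣ B` -/
  H : Ob → Ob → Type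
  /-- vertical morphisms `A ↠ B` -/
  V : Ob → Ob → Type
  hid : ∀ A, H A A
  hcomp : ∀ {A B C}, H A B → H B C → H A C
  hid_comp : ∀ {A B} (f : H A B), hcomp (hid A) f = f
  hcomp_id : ∀ {A B} (f : H A B), hcomp f (hid B) = f
  hassoc : ∀ {A B C D} (f : H A B) (g : H B C) (h : H C D),
    hcomp (hcomp f g) h = hcomp f (hcomp g h)
  vid : ∀ A, V A A
  vcomp : ∀ {A B C}, V A B → V B C → V A C
  vid_comp : ∀ {A B} (u : V A B), vcomp (vid A) u = u
  vcomp_id : ∀ {A B} (u : V A B), vcomp u (vid B) = u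
  vassoc : ∀ {A B C D} (u : V A B) (v : V B C) (w : V C D),
    vcomp (vcomp u v) w = vcomp u (vcomp v w)
  /-- `Sq f a b k` says that the boundary with top `f : A ↣ B`, left `a : A ↠ X`,
  right `b : B ↠ Y` and bottom `k : X ↣ Y` is a square of the double category. -/
  Sq : ∀ {A B X Y}, H A B → V A X → V B Y → H X Y → Prop
  sq_hid : ∀ {A X} (u : V A X), Sq (hid A) u u (hid X)
  sq_vid : ∀ {A B} (f : H A B), Sq f (vid A) (vid B) f
  sq_hcomp : ∀ {A B C X Y Z} {f : H A B} {g : H B C} {a : V A X} {b : V B Y} {c : V C Z}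
    {f' : H X Y} {g' : H Y Z},
    Sq f a b f' → Sq g b c g' → Sq (hcomp f g) a c (hcomp f' g')
  sq_vcomp : ∀ {A B X Y P Q} {f : H A B} {a : V A X} {b : V B Y} {f' : H X Y}
    {a' : V X P} {b' : V Y Q} {f'' : H P Q},
    Sq f a b f' → Sq f' a' b' f'' → Sq f (vcomp a a') (vcomp b b') f''

/-- A squares category: a flat pointed double category, i.e. a flat double category
with a distinguished object `O` which is initial in the horizontal category and
terminal in the vertical category. -/
structure SquaresCat extends FlatDoubleCat where
  O : Ob
  hfromO : ∀ A, H O A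
  hfromO_uniq : ∀ {A} (f g : H O A), f = g
  vtoO : ∀ A, V A O
  vtoO_uniq : ∀ {A} (u v : V A O), u = v

/-- A horizontal morphism is a horizontal weak equivalence if it participates in a
square whose bottom row is the identity of `O`. -/
def SquaresCat.IsHWE (C : SquaresCat) {A B : C.Ob} (f : C.H A B) : Prop :=
  ∃ (a : C.V A C.O) (b : C.V B C.O), C.Sq f a b (C.hid C.O)

/-- A vertical morphism is a vertical weak equivalence if it participates in a
square whose left edge is the identity of `O`. -/
def SquaresCat.IsVWE (C : SquaresCat) {A B : C.Ob} (u : C.V A B) : Prop :=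
  ∃ (f : C.H C.O A) (g : C.H C.O B), C.Sq f (C.vid C.O) u g

/-- An object of `S^□_n(C)`: a staircase diagram, encoded as a grid of objects
`obj i j` (with `obj i j = O` whenever `j ≤ i`, i.e. on and below the diagonal),
horizontal morphisms along the rows, vertical morphisms along the columns,
functorially, such that every resulting boundary is a distinguished square. -/
structure SObj (C : SquaresCat) (n : ℕ) where
  obj : Fin (n + 1) → Fin (n + 1) → C.Ob
  diag : ∀ i j : Fin (n + 1), j ≤ i → obj i j = C.O
  hmor : ∀ (i j j' : Fin (n + 1)), j ≤ j' → C.H (obj i j) (obj i j')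
  vmor : ∀ (i i' j : Fin (n + 1)), i ≤ i' → C.V (obj i j) (obj i' j)
  hmor_refl : ∀ i j, hmor i j j le_rfl = C.hid (obj i j)
  hmor_trans : ∀ i j j' j'' (h : j ≤ j') (h' : j' ≤ j''),
    hmor i j j'' (h.trans h') = C.hcomp (hmor i j j' h) (hmor i j' j'' h')
  vmor_refl : ∀ i j, vmor i i j le_rfl = C.vid (obj i j)
  vmor_trans : ∀ i i' i'' j (h : i ≤ i') (h' : i' ≤ i''),
    vmor i i'' j (h.trans h') = C.vcomp (vmor i i' j h) (vmor i' i'' j h')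
  issq : ∀ i i' j j' (hi : i ≤ i') (hj : j ≤ j'),
    C.Sq (hmor i j j' hj) (vmor i i' j hi) (vmor i i' j' hi) (hmor i' j j' hj)

/-- A morphism of `S^□_n(C)`: a vertical natural transformation of staircase
diagrams, with identity components on the diagonal part, such that every boundary
with two horizontal and two vertical edges is a distinguished square and every
all-vertical square commutes. -/
structure SHom (C : SquaresCat) (n : ℕ) (X Y : SObj C n) where
  app : ∀ i j : Fin (n + 1), C.V (X.obj i j) (Y.obj i j)
  app_diag : ∀ i j : Fin (n + 1), j ≤ i → HEq (app i j) (C.vid C.O)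
  sq_h : ∀ i j j' (h : j ≤ j'),
    C.Sq (X.hmor i j j' h) (app i j) (app i j') (Y.hmor i j j' h)
  nat_v : ∀ i i' j (h : i ≤ i'),
    C.vcomp (X.vmor i i' j h) (app i' j) = C.vcomp (app i j) (Y.vmor i i' j h)

lemma vwe_of_sq_aux (C : SquaresCat) {A B P Q : C.Ob} (f : C.H A P) (g : C.H B Q)
    (a : C.V A B) (u : C.V P Q) (sq : C.Sq f a u g) (hA : A = C.O) (hB : B = C.O)
    (ha : HEq a (C.vid C.O)) : C.IsVWE u := by
  subst hA; subst hB
  exact ⟨f, g, by rwa [eq_of_heq ha] at sq⟩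

lemma heq_vid_aux (C : SquaresCat) {A B : C.Ob} (u : C.V A B) (v : C.V B A)
    (hA : A = C.O) (hB : B = C.O) (hu : HEq u (C.vid C.O))
    (hc : C.vcomp u v = C.vid A) : HEq v (C.vid C.O) := by
  subst hA; subst hB
  rw [eq_of_heq hu, C.vid_comp] at hc
  exact heq_of_eq hc

/-- If `C` is a squares category in which all vertical weak equivalences are
invertible, and inverting the (invertible) vertical edges of any distinguished
square again yields a distinguished square, then every `S^□_n(C)` is a groupoid:
every morphism admits a componentwise inverse morphism. -/
theorem sdot_isGroupoid (C : SquaresCat)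
    (hinv : ∀ {A B : C.Ob} (u : C.V A B), C.IsVWE u →
      ∃ v : C.V B A, C.vcomp u v = C.vid A ∧ C.vcomp v u = C.vid B)
    (hsqinv : ∀ {A B X Y : C.Ob} (f : C.H A B) (g : C.V A X) (h : C.V B Y) (k : C.H X Y)
      (g' : C.V X A) (h' : C.V Y B),
      C.Sq f g h k → C.vcomp g g' = C.vid A → C.vcomp g' g = C.vid X →
      C.vcomp h h' = C.vid B → C.vcomp h' h = C.vid Y → C.Sq k g' h' f)
    (n : ℕ) (X Y : SObj C n) (τ : SHom C n X Y) :
    ∃ σ : SHom C n Y X,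
      (∀ i j, C.vcomp (τ.app i j) (σ.app i j) = C.vid (X.obj i j)) ∧
      (∀ i j, C.vcomp (σ.app i j) (τ.app i j) = C.vid (Y.obj i j)) := by
  -- every component is a vertical weak equivalence
  have vwe : ∀ i j, C.IsVWE (τ.app i j) := by
    intro i j
    rcases le_total j i with h | h
    · exact vwe_of_sq_aux C (C.hid _) (C.hid _) (τ.app i j) (τ.app i j)
        (C.sq_hid _) (X.diag i j h) (Y.diag i j h) (τ.app_diag i j h)
    · exact vwe_of_sq_aux C (X.hmor i i j h) (Y.hmor i i j h) (τ.app i i) (τ.app i j)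
        (τ.sq_h i i j h) (X.diag i i le_rfl) (Y.diag i i le_rfl) (τ.app_diag i i le_rfl)
  have hspec := fun i j => (hinv (τ.app i j) (vwe i j)).choose_spec
  set inv : ∀ i j, C.V (Y.obj i j) (X.obj i j) :=
    fun i j => (hinv (τ.app i j) (vwe i j)).choose with hinvdef
  refine ⟨⟨inv, ?_, ?_, ?_⟩, fun i j => (hspec i j).1, fun i j => (hspec i j).2⟩
  · intro i j h
    exact heq_vid_aux C (τ.app i j) (inv i j) (X.diag i j h) (Y.diag i j h)
      (τ.app_diag i j h) (hspec i j).1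
  · intro i j j' h
    exact hsqinv _ _ _ _ _ _ (τ.sq_h i j j' h)
      (hspec i j).1 (hspec i j).2 (hspec i j').1 (hspec i j').2
  · intro i i' j h
    have nat := τ.nat_v i i' j h
    have : C.vcomp (inv i j) (C.vcomp (C.vcomp (τ.app i j) (Y.vmor i i' j h)) (inv i' j))
        = C.vcomp (inv i j) (C.vcomp (C.vcomp (X.vmor i i' j h) (τ.app i' j)) (inv i' j)) := by
      rw [nat]
    calc C.vcomp (Y.vmor i i' j h) (inv i' j)
        = C.vcomp (inv i j) (C.vcomp (C.vcomp (τ.app i j) (Y.vmor i i' j h)) (inv i' j)) := by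
          rw [C.vassoc, ← C.vassoc (inv i j), (hspec i j).2, C.vid_comp]
      _ = C.vcomp (inv i j) (C.vcomp (C.vcomp (X.vmor i i' j h) (τ.app i' j)) (inv i' j)) := this
      _ = C.vcomp (inv i j) (X.vmor i i' j h) := by
          rw [C.vassoc, (hspec i' j).1, C.vcomp_id]
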